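/- Let k be a field of characteristic zero, R = k[t], B = R[X,Y,Z], and D the R-derivation with DX = t, DY = X, DZ = Y. Set F = 2tY - X², G = 3t²Z - 3tXY + X³, and H = 8tY³ + 9t²Z² - 18tXYZ - 3X²Y² + 6X³Z. Then D is locally nilpotent, DF = DG = DH = 0, and F³ + G² = t²H. -/
import Mathlib


open MvPolynomial

/-- `R = k[t]`. -/
abbrev Stmt13R (k : Type*) [Field k] := Polynomial k

/-- `B = R[X,Y,Z]` with `X = X 0`, `Y = X 1`, `Z = X 2`. -/
abbrev Stmt13B (k : Type*) [Field k] := MvPolynomial (Fin 3) (Stmt13R k)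

section Aux
variable {R A : Type*} [CommRing R] [CommRing A] [Algebra R A] (D : Derivation R A A)

lemma auxIterZero (n : ℕ) : (⇑D)^[n] (0 : A) = 0 := by
  induction n with
  | zero => rfl
  | succ n ih => rw [Function.iterate_succ_apply, map_zero, ih]

lemma auxIterAdd (n : ℕ) (a b : A) :
    (⇑D)^[n] (a + b) = (⇑D)^[n] a + (⇑D)^[n] b := by
  induction n generalizing a b with
  | zero => rfl
  | succ n ih => rw [Function.iterate_succ_apply, map_add, ih,
      Function.iterate_succ_apply, Function.iterate_succ_apply]

lemma auxIterMul : ∀ (N m n : ℕ) (a b : A), m + n = N →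
    (⇑D)^[m] a = 0 → (⇑D)^[n] b = 0 → (⇑D)^[N] (a * b) = 0 := by
  intro N
  induction N with
  | zero =>
    intro m n a b hmn ha hb
    obtain ⟨rfl, rfl⟩ := Nat.add_eq_zero.mp hmn
    simp only [Function.iterate_zero, id] at ha hb ⊢
    rw [ha, zero_mul]
  | succ N ih =>
    intro m n a b hmn ha hb
    match m, n with
    | 0, n =>
      simp only [Function.iterate_zero, id] at ha
      rw [ha, zero_mul, auxIterZero]
    | m+1, 0 =>
      simp only [Function.iterate_zero, id] at hb
      rw [hb, mul_zero, auxIterZero]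
    | m+1, n+1 =>
      rw [Function.iterate_succ_apply, D.leibniz, smul_eq_mul, smul_eq_mul, auxIterAdd]
      have h1 : (⇑D)^[N] (a * D b) = 0 := by
        refine ih (m+1) n a (D b) (by omega) ha ?_
        rw [← Function.iterate_succ_apply]; exact hb
      have h2 : (⇑D)^[N] (b * D a) = 0 := by
        refine ih (n+1) m b (D a) (by omega) hb ?_
        rw [← Function.iterate_succ_apply]; exact ha
      rw [h1, h2, add_zero]

end Aux

/-- Let `k` be a field of characteristic zero, `R = k[t]`, `B = R[X,Y,Z]`, and `D` the
`R`-derivation with `DX = t`, `DY = X`, `DZ = Y`.  Set `F = 2tY - X²`,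
`G = 3t²Z - 3tXY + X³` and `H = 8tY³ + 9t²Z² - 18tXYZ - 3X²Y² + 6X³Z`.
Then `D` is locally nilpotent, `DF = DG = DH = 0` and `F³ + G² = t²H`. -/
theorem stmt13 {k : Type*} [Field k] [CharZero k]
    (D : Derivation (Stmt13R k) (Stmt13B k) (Stmt13B k))
    (hX : D (X 0) = (C Polynomial.X : Stmt13B k))
    (hY : D (X 1) = X 0)
    (hZ : D (X 2) = X 1)
    (F G H : Stmt13B k)
    (hF : F = 2 * (C Polynomial.X : Stmt13B k) * X 1 - X 0 ^ 2)
    (hG : G = 3 * (C Polynomial.X : Stmt13B k) ^ 2 * X 2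
        - 3 * (C Polynomial.X : Stmt13B k) * X 0 * X 1 + X 0 ^ 3)
    (hH : H = 8 * (C Polynomial.X : Stmt13B k) * X 1 ^ 3
        + 9 * (C Polynomial.X : Stmt13B k) ^ 2 * X 2 ^ 2
        - 18 * (C Polynomial.X : Stmt13B k) * X 0 * X 1 * X 2
        - 3 * X 0 ^ 2 * X 1 ^ 2 + 6 * X 0 ^ 3 * X 2) :
    (∀ f : Stmt13B k, ∃ n : ℕ, (⇑D)^[n] f = 0) ∧
    D F = 0 ∧ D G = 0 ∧ D H = 0 ∧
    F ^ 3 + G ^ 2 = (C Polynomial.X : Stmt13B k) ^ 2 * H := by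
  have hC : ∀ r : Stmt13R k, D (C r) = 0 := by
    intro r
    have : (C r : Stmt13B k) = algebraMap (Stmt13R k) (Stmt13B k) r := rfl
    rw [this, D.map_algebraMap]
  refine ⟨?_, ?_, ?_, ?_, ?_⟩
  · intro f
    induction f using MvPolynomial.induction_on with
    | C a => exact ⟨1, by simpa using hC a⟩
    | add p q hp hq =>
      obtain ⟨m, hm⟩ := hp; obtain ⟨n, hn⟩ := hq
      refine ⟨m + n, ?_⟩
      rw [auxIterAdd]
      have h1 : (⇑D)^[m+n] p = 0 := by
        rw [add_comm, Function.iterate_add_apply, hm, auxIterZero]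
      have h2 : (⇑D)^[m+n] q = 0 := by
        rw [Function.iterate_add_apply, hn, auxIterZero]
      rw [h1, h2, add_zero]
    | mul_X p i hp =>
      obtain ⟨m, hm⟩ := hp
      have hXi : (⇑D)^[4] (X i : Stmt13B k) = 0 := by
        fin_cases i
        · show (⇑D)^[4] (X 0 : Stmt13B k) = 0
          simp only [Function.iterate_succ_apply, Function.iterate_zero, id, hX]
          rw [hC, map_zero, map_zero]
        · show (⇑D)^[4] (X 1 : Stmt13B k) = 0
          simp only [Function.iterate_succ_apply, Function.iterate_zero, id, hY, hX]
          rw [hC, map_zero]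
        · show (⇑D)^[4] (X 2 : Stmt13B k) = 0
          simp only [Function.iterate_succ_apply, Function.iterate_zero, id, hZ, hY, hX]
          rw [hC]
      exact ⟨m + 4, auxIterMul D (m+4) m 4 p (X i) rfl hm hXi⟩
  · have hn : ∀ n : ℕ, D ((n : Stmt13B k)) = 0 := fun n => D.map_natCast n
    rw [hF]
    simp only [map_sub, map_add, Derivation.leibniz, Derivation.leibniz_pow, hX, hY, hZ, hC,
      smul_eq_mul, show ((2:Stmt13B k)) = ((2:ℕ):Stmt13B k) by norm_num, hn]
    ring
  · have hn : ∀ n : ℕ, D ((n : Stmt13B k)) = 0 := fun n => D.map_natCast n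
    rw [hG]
    simp only [map_sub, map_add, Derivation.leibniz, Derivation.leibniz_pow, hX, hY, hZ, hC,
      smul_eq_mul, show ((3:Stmt13B k)) = ((3:ℕ):Stmt13B k) by norm_num, hn]
    ring
  · have hn : ∀ n : ℕ, D ((n : Stmt13B k)) = 0 := fun n => D.map_natCast n
    rw [hH]
    simp only [map_sub, map_add, Derivation.leibniz, Derivation.leibniz_pow, hX, hY, hZ, hC,
      smul_eq_mul, show ((3:Stmt13B k)) = ((3:ℕ):Stmt13B k) by norm_num,
      show ((6:Stmt13B k)) = ((6:ℕ):Stmt13B k) by norm_num,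
      show ((8:Stmt13B k)) = ((8:ℕ):Stmt13B k) by norm_num,
      show ((9:Stmt13B k)) = ((9:ℕ):Stmt13B k) by norm_num,
      show ((18:Stmt13B k)) = ((18:ℕ):Stmt13B k) by norm_num, hn]
    ring
  · rw [hF, hG, hH]; ring
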